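/- arXiv:2005.01257 — 4 statements merged into one kernel-verified Lean document; each statement's English description precedes it below -/
import Mathlib

section
/- Let γ > 0, ρ ∈ C^∞([0,∞);ℝ) with 0 ≤ ρ'(t) < γ^{-1} tan(π/8) for all t ≥ 0 and ρ(0) = 0, let ψ(ξ) = |ξ|^{-1}ρ(|ξ|)ξ, φ_θ(ξ) = ξ + θψ(ξ), and D_γ = {θ ∈ ℂ : |Re θ| + |Im θ| < γ}. Then for all θ ∈ D_γ and ξ ∈ ℝⁿ \ {0}: φ_θ(ξ)·φ_θ(ξ) = (|ξ| + θρ(|ξ|))², -π/4 < arg(φ_θ(ξ)·φ_θ(ξ)) < π/4, and |φ_θ(ξ)·φ_θ(ξ)| > (1 - tan(π/8))² |ξ|². -/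
open MeasureTheory Complex Real Filter Metric
open scoped Classical

noncomputable section

abbrev Rn (n : ℕ) := EuclideanSpace ℝ (Fin n)
abbrev L2 (n : ℕ) := MeasureTheory.Lp ℂ 2 (volume : Measure (Rn n))
abbrev Op (n : ℕ) := L2 n →L[ℂ] L2 n

/-- The Laplacian of a Schwartz test function. -/
def schwartzLap {n : ℕ} (φ : SchwartzMap (Rn n) ℂ) (x : Rn n) : ℂ :=
  ∑ i : Fin n, iteratedFDeriv ℝ 2 (⇑φ) x ![EuclideanSpace.single i 1, EuclideanSpace.single i 1]

/-- `(-Δ + W - z) u = f` in the sense of distributions, for `u, f ∈ L²`. -/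
def IsWeakSolution {n : ℕ} (W : Rn n → ℂ) (z : ℂ) (u f : L2 n) : Prop :=
  ∀ φ : SchwartzMap (Rn n) ℂ,
    ∫ x, u x * (-(schwartzLap φ x) + (W x - z) * φ x) = ∫ x, f x * φ x

/-- `T` is the (bounded, everywhere defined) resolvent `(-Δ + W - z)⁻¹` on `L²`. -/
def IsResolvent {n : ℕ} (W : Rn n → ℂ) (z : ℂ) (T : Op n) : Prop :=
  (∀ f, IsWeakSolution W z (T f) f) ∧ ∀ u f, IsWeakSolution W z u f → u = T f

/-- `T` is the operator of multiplication by the (bounded) function `g`. -/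
def IsMulOp {n : ℕ} (g : Rn n → ℂ) (T : Op n) : Prop :=
  ∀ u : L2 n, (⇑(T u) : Rn n → ℂ) =ᵐ[volume] fun x => g x * u x

/-- The sector `-π/8 < arg λ < 7π/8`. -/
def Sector : Set ℂ := {z : ℂ | -(π/8) < z.arg ∧ z.arg < 7*π/8}

/-- The rectangle `Ω = (a', a) + i(-γ', b)`. -/
def Rect (a' a γ' b : ℝ) : Set ℂ := {z : ℂ | z.re ∈ Set.Ioo a' a ∧ z.im ∈ Set.Ioo (-γ') b}

/-- `ψ(ξ) = ρ(|ξ|) ξ / |ξ|`. -/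
def psiR {n : ℕ} (ρ : ℝ → ℝ) (ξ : Rn n) : Rn n :=
  if ξ = 0 then 0 else (ρ ‖ξ‖ / ‖ξ‖) • ξ

/-- The deformation `φ_θ(ξ) = ξ + θ ψ(ξ)`, with values in `ℂⁿ`. -/
def phiTheta {n : ℕ} (ρ : ℝ → ℝ) (θ : ℂ) (ξ : Rn n) : Fin n → ℂ :=
  fun j => (ξ j : ℂ) + θ * (psiR ρ ξ j : ℂ)

/-- The bilinear (non-Hermitian) dot product on `ℂⁿ`. -/
def dotC {n : ℕ} (v w : Fin n → ℂ) : ℂ := ∑ j, v j * w j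

/-- The Jacobian matrix `Dψ(ξ) = (ρ(|ξ|)/|ξ|) I + (ρ'(|ξ|)/|ξ|² - ρ(|ξ|)/|ξ|³) ξξᵀ`. -/
def DpsiMat {n : ℕ} (ρ : ℝ → ℝ) (ξ : Rn n) : Matrix (Fin n) (Fin n) ℝ :=
  if ξ = 0 then 0 else
    (ρ ‖ξ‖ / ‖ξ‖) • (1 : Matrix (Fin n) (Fin n) ℝ)
      + (deriv ρ ‖ξ‖ / ‖ξ‖ ^ 2 - ρ ‖ξ‖ / ‖ξ‖ ^ 3) • Matrix.of fun i j => ξ i * ξ j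

/-- The Jacobian matrix `Dφ_θ(ξ) = I + θ Dψ(ξ)` (a complex symmetric matrix). -/
def DphiMat {n : ℕ} (ρ : ℝ → ℝ) (θ : ℂ) (ξ : Rn n) : Matrix (Fin n) (Fin n) ℂ :=
  1 + θ • (DpsiMat ρ ξ).map Complex.ofReal

/-- The quadratic form `(Dφ_θ(ξ)⁻² ξ*)·ξ*` with `Dφ_θ⁻² = (Dφ_θ⁻¹)ᵀ Dφ_θ⁻¹`. -/
def qForm {n : ℕ} (ρ : ℝ → ℝ) (θ : ℂ) (ξ ξs : Rn n) : ℂ :=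
  dotC ((((DphiMat ρ θ ξ)⁻¹).transpose * (DphiMat ρ θ ξ)⁻¹).mulVec fun j => (ξs j : ℂ))
    (fun j => (ξs j : ℂ))

/-- The region `D_γ = {θ ∈ ℂ : |Re θ| + |Im θ| < γ}`. -/
def Dgamma (γ : ℝ) : Set ℂ := {θ : ℂ | |θ.re| + |θ.im| < γ}

private lemma arg_abs_lt_pi_div_four {z : ℂ} (hre : 0 < z.re) (him : |z.im| < z.re) :
    -(π/4) < z.arg ∧ z.arg < π/4 := by
  have habspos : 0 < ‖z‖ := by
    apply norm_pos_iff.mpr; intro h; rw [h] at hre; simp at hre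
  have hsq : Real.sqrt 2 * |z.im| < ‖z‖ := by
    refine lt_of_pow_lt_pow_left₀ 2 (norm_nonneg z) ?_
    rw [mul_pow, Real.sq_sqrt (by norm_num : (0:ℝ) ≤ 2), Complex.sq_norm,
      Complex.normSq_apply, _root_.sq_abs]
    nlinarith [_root_.sq_abs z.im, abs_nonneg z.im, him, hre, abs_nonneg z.im]
  have hu : |z.im / ‖z‖| < Real.sqrt 2 / 2 := by
    rw [abs_div, _root_.abs_of_pos habspos, div_lt_div_iff₀ habspos (by norm_num : (0:ℝ) < 2)]
    nlinarith [Real.sq_sqrt (by norm_num : (0:ℝ) ≤ 2), Real.sqrt_nonneg 2, abs_nonneg z.im]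
  obtain ⟨hu1, hu2⟩ := abs_lt.mp hu
  have harg : z.arg = Real.arcsin (z.im / ‖z‖) :=
    Complex.arg_of_re_nonneg (le_of_lt hre)
  have hpi : (0:ℝ) < π := Real.pi_pos
  constructor
  · rw [harg]
    rw [Real.lt_arcsin_iff_sin_lt' (by constructor <;> [linarith; linarith] :
        -(π/4) ∈ Set.Ico (-(π / 2)) (π / 2))]
    rw [Real.sin_neg, Real.sin_pi_div_four]
    linarith
  · rw [harg]
    rw [Real.arcsin_lt_iff_lt_sin' (by constructor <;> [linarith; linarith] :
        π/4 ∈ Set.Ioc (-(π / 2)) (π / 2))]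
    rw [Real.sin_pi_div_four]
    linarith

set_option maxHeartbeats 1000000 in
/-- equations (3.14)–(3.15) of the paper.  For `θ ∈ D_γ` and
`ξ ∈ ℝⁿ \ {0}` one has `φ_θ(ξ)·φ_θ(ξ) = (|ξ| + θρ(|ξ|))²`,
`-π/4 < arg(φ_θ(ξ)·φ_θ(ξ)) < π/4`, and `|φ_θ(ξ)·φ_θ(ξ)| > (1 - tan(π/8))²|ξ|²`. -/
theorem phi_theta_square_bounds
    (n : ℕ) (γ : ℝ) (hγ : 0 < γ)
    (ρ : ℝ → ℝ) (hρ : ContDiff ℝ (⊤ : ℕ∞) ρ) (hρ0 : ρ 0 = 0)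
    (hρ' : ∀ t ≥ (0:ℝ), 0 ≤ deriv ρ t ∧ deriv ρ t < γ⁻¹ * Real.tan (π/8))
    (θ : ℂ) (hθ : θ ∈ Dgamma γ) (ξ : Rn n) (hξ : ξ ≠ 0) :
    dotC (phiTheta ρ θ ξ) (phiTheta ρ θ ξ) = ((‖ξ‖ : ℂ) + θ * ((ρ ‖ξ‖ : ℝ) : ℂ)) ^ 2
      ∧ -(π/4) < (dotC (phiTheta ρ θ ξ) (phiTheta ρ θ ξ)).arg
      ∧ (dotC (phiTheta ρ θ ξ) (phiTheta ρ θ ξ)).arg < π/4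
      ∧ (1 - Real.tan (π/8)) ^ 2 * ‖ξ‖ ^ 2
          < ‖dotC (phiTheta ρ θ ξ) (phiTheta ρ θ ξ)‖ := by
  classical
  set r : ℝ := ‖ξ‖ with hr
  have hrpos : 0 < r := norm_pos_iff.mpr hξ
  set t : ℝ := Real.tan (π/8) with ht
  have hpi8 : (0:ℝ) < π/8 := by positivity
  have hpi8' : π/8 < π/2 := by linarith [Real.pi_pos]
  have htpos : 0 < t := Real.tan_pos_of_pos_of_lt_pi_div_two hpi8 hpi8'
  have ht1 : t < 1 := by
    have := Real.tan_lt_tan_of_nonneg_of_lt_pi_div_two (le_of_lt hpi8)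
      (by linarith [Real.pi_pos] : π/4 < π/2) (by linarith [Real.pi_pos])
    simpa [Real.tan_pi_div_four] using this
  have htsq : t^2 + 2*t = 1 := by
    have h2 : Real.tan (2 * (π/8)) = 2 * t / (1 - t^2) := Real.tan_two_mul
    have h3 : (2:ℝ) * (π/8) = π/4 := by ring
    rw [h3, Real.tan_pi_div_four] at h2
    have hne : 1 - t^2 ≠ 0 := by nlinarith
    field_simp at h2
    nlinarith [h2]
  -- bound on ρ r via MVT
  obtain ⟨c, hc, hceq⟩ := exists_deriv_eq_slope ρ hrpos
    (hρ.continuous.continuousOn) ((hρ.differentiable (by simp)).differentiableOn)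
  have hc0 : (0:ℝ) ≤ c := le_of_lt hc.1
  have heq : ρ r = deriv ρ c * r := by
    rw [hρ0, sub_zero, sub_zero] at hceq
    field_simp at hceq
    linarith [hceq]
  have hρr0 : 0 ≤ ρ r := by
    have h := (hρ' c hc0).1
    nlinarith [heq]
  have hρrlt : γ * ρ r < t * r := by
    have h := (hρ' c hc0).2
    have hγ' : γ * γ⁻¹ = 1 := mul_inv_cancel₀ (ne_of_gt hγ)
    calc γ * ρ r = γ * (deriv ρ c * r) := by rw [heq]
      _ < γ * ((γ⁻¹ * t) * r) := by
          apply mul_lt_mul_of_pos_left _ hγ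
          exact mul_lt_mul_of_pos_right h hrpos
      _ = t * r := by field_simp
  have hθγ : |θ.re| + |θ.im| < γ := hθ
  -- the key complex number w
  set w : ℂ := (r : ℂ) + θ * ((ρ r : ℝ) : ℂ) with hw
  set a : ℝ := w.re with ha
  set b : ℝ := w.im with hb
  have hare : a = r + θ.re * ρ r := by simp [ha, hw]
  have hbim : b = θ.im * ρ r := by simp [hb, hw]
  have habs_re : |θ.re| * ρ r ≤ γ * ρ r := by
    have : |θ.re| ≤ γ := le_of_lt (lt_of_le_of_lt (le_add_of_nonneg_right (abs_nonneg _)) hθγ)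
    exact mul_le_mul_of_nonneg_right this hρr0
  have halow : (1 - t) * r < a := by
    have : r - |θ.re| * ρ r ≤ a := by
      rw [hare]; nlinarith [neg_abs_le θ.re, abs_nonneg θ.re]
    nlinarith
  have hapos : 0 < a := by nlinarith
  have hblt : |b| < t * a := by
    rw [hbim, hare]
    have h1 : |θ.im * ρ r| = |θ.im| * ρ r := by
      rw [abs_mul, _root_.abs_of_nonneg hρr0]
    rw [h1]
    nlinarith [mul_le_mul_of_nonneg_right (le_of_lt hθγ) hρr0, hρrlt,
      mul_le_mul_of_nonneg_right (neg_abs_le θ.re) (mul_nonneg htpos.le hρr0),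
      mul_nonneg (mul_nonneg (sub_nonneg.mpr ht1.le) (abs_nonneg θ.re)) hρr0]
  have hb2 : b^2 < t^2 * a^2 := by nlinarith [abs_nonneg b, _root_.sq_abs b]
  -- the dot product equals w^2
  have hsum : ∑ j, ((ξ j : ℂ))^2 = ((r:ℝ) : ℂ)^2 := by
    have hnorm : r^2 = ∑ j, (ξ j)^2 := by
      rw [hr, EuclideanSpace.norm_eq]
      rw [Real.sq_sqrt (Finset.sum_nonneg fun i _ => sq_nonneg _)]
      exact Finset.sum_congr rfl fun i _ => by rw [Real.norm_eq_abs, _root_.sq_abs]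
    calc ∑ j, ((ξ j : ℂ))^2 = ((∑ j, (ξ j)^2 : ℝ) : ℂ) := by push_cast; rfl
      _ = ((r^2 : ℝ) : ℂ) := by rw [← hnorm]
      _ = ((r:ℝ) : ℂ)^2 := by push_cast; rfl
  have hdot : dotC (phiTheta ρ θ ξ) (phiTheta ρ θ ξ) = w ^ 2 := by
    have hrne : r ≠ 0 := ne_of_gt hrpos
    have hphi : ∀ j, phiTheta ρ θ ξ j = (1 + θ * ((ρ r / r : ℝ) : ℂ)) * (ξ j : ℂ) := by
      intro j
      simp only [phiTheta, psiR, if_neg hξ]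
      have h5 : ((ρ ‖ξ‖ / ‖ξ‖) • ξ) j = (ρ r / r) * ξ j := rfl
      rw [h5]
      push_cast
      ring
    have hrC : ((r:ℝ):ℂ) ≠ 0 := by exact_mod_cast hrne
    have hw2 : w = ((r:ℝ):ℂ) * (1 + θ * ((ρ r / r : ℝ) : ℂ)) := by
      have hcast : ((ρ r / r : ℝ) : ℂ) = ((ρ r : ℝ):ℂ) / ((r:ℝ):ℂ) := by push_cast; rfl
      rw [hw, hcast]
      field_simp
    rw [hw2]
    simp only [dotC, hphi]
    have h6 : ∀ j : Fin n,
        (1 + θ * ((ρ r / r : ℝ):ℂ)) * (ξ j:ℂ) * ((1 + θ * ((ρ r / r : ℝ):ℂ)) * (ξ j:ℂ))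
        = (1 + θ * ((ρ r / r : ℝ):ℂ))^2 * (ξ j:ℂ)^2 := fun j => by ring
    rw [Finset.sum_congr rfl (fun j _ => h6 j), ← Finset.mul_sum, hsum]
    ring
  have hre : (w^2).re = a^2 - b^2 := by
    rw [pow_two, Complex.mul_re, ← ha, ← hb]; ring
  have him : (w^2).im = 2*a*b := by
    rw [pow_two, Complex.mul_im, ← ha, ← hb]; ring
  have hrepos : 0 < (w^2).re := by rw [hre]; nlinarith
  have himlt : |(w^2).im| < (w^2).re := by
    rw [hre, him, abs_mul, abs_mul]
    rw [_root_.abs_of_nonneg (by norm_num : (0:ℝ) ≤ 2), _root_.abs_of_pos hapos]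
    nlinarith [abs_nonneg b, _root_.sq_abs b]
  obtain ⟨harg1, harg2⟩ := arg_abs_lt_pi_div_four hrepos himlt
  refine ⟨by rw [hdot, hw], by rw [hdot]; exact harg1, by rw [hdot]; exact harg2, ?_⟩
  rw [hdot]
  have h7 : a ≤ ‖w‖ := by rw [ha]; exact Complex.re_le_norm w
  have h8 : ‖w^2‖ = ‖w‖ ^ 2 := by rw [norm_pow]
  rw [h8]
  have h9 : (0:ℝ) < (1-t)*r := mul_pos (by linarith) hrpos
  have h10 : ((1-t)*r)^2 < a^2 := by nlinarith
  have h11 : a^2 ≤ ‖w‖ ^ 2 := by nlinarith [norm_nonneg w]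
  nlinarith [h10, h11]
end
end

section
/- With γ, ρ, ψ, φ_θ, D_γ as above, let Dφ_θ(ξ)^{-2} = (Dφ_θ(ξ)^{-1})^T Dφ_θ(ξ)^{-1}. Then for all θ ∈ D_γ, ξ ∈ ℝⁿ \ {0}, and ξ* ∈ ℝⁿ: (i) if ±Im θ ≥ 0 then 0 ≤ ∓arg((Dφ_θ(ξ)^{-2} ξ*)·ξ*) < π/4; and (ii) there is a constant C > 0 (depending only on γ and sup ρ') such that |(Dφ_θ(ξ)^{-2} ξ*)·ξ*| ≥ C |ξ*|². -/
open MeasureTheory Complex Real Filter Metric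
open scoped Classical

noncomputable section

lemma tau_sq : Real.tan (π/8) ^ 2 + 2 * Real.tan (π/8) = 1 := by
  have h := Real.tan_two_mul (x := π/8)
  have h2 : (2:ℝ) * (π/8) = π/4 := by ring
  rw [h2, Real.tan_pi_div_four] at h
  set τ := Real.tan (π/8)
  by_cases hd : 1 - τ^2 = 0
  · rw [hd] at h; simp at h
  · field_simp at h; linarith

lemma tau_pos : 0 < Real.tan (π/8) :=
  Real.tan_pos_of_pos_of_lt_pi_div_two (by positivity) (by linarith [Real.pi_pos])

lemma tau_lt_half : Real.tan (π/8) < 1/2 := by nlinarith [tau_sq, tau_pos]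

lemma tau_gt : 2/5 < Real.tan (π/8) := by nlinarith [tau_sq, tau_pos, tau_lt_half]

set_option maxHeartbeats 1600000 in
lemma z_props (γ : ℝ) (hγ : 0 < γ) (θ : ℂ) (hθ : |θ.re| + |θ.im| < γ) (c : ℝ)
    (hc0 : 0 ≤ c) (hc1 : c < γ⁻¹ * Real.tan (π/8)) :
    (1 + θ * (c:ℂ)) ≠ 0 ∧
    1/16 ≤ (((1 + θ*(c:ℂ))^2)⁻¹).re ∧
    |(((1 + θ*(c:ℂ))^2)⁻¹).im| < (((1 + θ*(c:ℂ))^2)⁻¹).re ∧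
    ∃ k : ℝ, 0 ≤ k ∧ (((1 + θ*(c:ℂ))^2)⁻¹).im = -k * θ.im := by
  set τ := Real.tan (π/8) with hτ
  have htau : τ^2 + 2*τ = 1 := tau_sq
  have htp : 0 < τ := tau_pos
  have hth : τ < 1/2 := tau_lt_half
  have htg : 2/5 < τ := tau_gt
  have hkey : c * |θ.re| + c * |θ.im| < τ := by
    rcases eq_or_lt_of_le hc0 with h | h
    · rw [← h]; simpa using htp
    · have h1 : c * (|θ.re| + |θ.im|) < c * γ := by
        exact mul_lt_mul_of_pos_left hθ h
      have h2 : c * γ < τ := by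
        have := mul_lt_mul_of_pos_right hc1 hγ
        rw [mul_comm γ⁻¹ τ, mul_assoc, inv_mul_cancel₀ hγ.ne', mul_one] at this
        exact this
      nlinarith
  set Rr : ℝ := 1 + θ.re * c with hRr
  set Ii : ℝ := θ.im * c with hIi
  have hwre : (1 + θ*(c:ℂ)).re = Rr := by simp [hRr]
  have hwim : (1 + θ*(c:ℂ)).im = Ii := by simp [hIi]
  have habsre : θ.re * c ≥ -(c * |θ.re|) := by
    rw [mul_comm]; nlinarith [neg_abs_le θ.re]
  have habsre' : θ.re * c ≤ c * |θ.re| := by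
    rw [mul_comm]; nlinarith [le_abs_self θ.re]
  have hcn : 0 ≤ c * |θ.im| := by positivity
  have hcn' : 0 ≤ c * |θ.re| := by positivity
  have hR1 : 1/2 < Rr := by rw [hRr]; nlinarith
  have hR2 : Rr < 3/2 := by rw [hRr]; nlinarith
  have habs : |Ii| < τ * Rr := by
    have hIabs : |Ii| = c * |θ.im| := by rw [hIi, abs_mul, _root_.abs_of_nonneg hc0]; ring
    rw [hIabs, hRr]
    nlinarith
  have hI2 : Ii^2 < τ^2 * Rr^2 := by nlinarith [abs_nonneg Ii, _root_.sq_abs Ii]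
  set N : ℝ := (Rr^2 + Ii^2)^2 with hNdef
  have hN : 0 < N := by positivity
  have hre2 : ((1+θ*(c:ℂ))^2).re = Rr^2 - Ii^2 := by
    rw [sq, Complex.mul_re, hwre, hwim]; ring
  have him2 : ((1+θ*(c:ℂ))^2).im = 2*Rr*Ii := by
    rw [sq, Complex.mul_im, hwre, hwim]; ring
  have hnorm : Complex.normSq ((1+θ*(c:ℂ))^2) = N := by
    rw [map_pow, Complex.normSq_apply, hwre, hwim, hNdef]; ring
  have hzre : (((1 + θ*(c:ℂ))^2)⁻¹).re = (Rr^2 - Ii^2)/N := by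
    rw [Complex.inv_re, hre2, hnorm]
  have hzim : (((1 + θ*(c:ℂ))^2)⁻¹).im = -(2*Rr*Ii)/N := by
    rw [Complex.inv_im, him2, hnorm]
  have hwne : (1 + θ * (c:ℂ)) ≠ 0 := by
    intro h
    have : (1 + θ * (c:ℂ)).re = 0 := by rw [h]; simp
    rw [hwre] at this; linarith
  clear_value τ Rr Ii N
  refine ⟨hwne, ?_, ?_, ?_⟩
  · rw [hzre, le_div_iff₀ hN]
    have hx : Rr^2 ≤ 9/4 := by nlinarith
    have hA : Rr^2 + Ii^2 ≤ (2 - 2*τ)*Rr^2 := by nlinarith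
    have hB : (Rr^2+Ii^2)^2 ≤ ((2-2*τ)*Rr^2)^2 := by
      apply pow_le_pow_left₀ (by positivity) hA
    have hD : ((2-2*τ)*Rr^2)^2 ≤ 9*(1-τ)^2*Rr^2 := by nlinarith [sq_nonneg (1-τ), sq_nonneg Rr]
    have hE : 9*(1-τ)^2*Rr^2 ≤ 32*τ*Rr^2 := by nlinarith [sq_nonneg Rr]
    have hG : 32*τ*Rr^2 ≤ 16*(Rr^2 - Ii^2) := by nlinarith
    rw [hNdef]
    linarith
  · rw [hzre, hzim, abs_div, _root_.abs_of_pos hN, div_lt_div_iff₀ hN hN]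
    apply (mul_lt_mul_iff_of_pos_right hN).2
    have h1 : |(-(2*Rr*Ii))| = 2*Rr*|Ii| := by
      rw [abs_neg, abs_mul, abs_mul, _root_.abs_of_pos (by norm_num : (0:ℝ) < 2),
        _root_.abs_of_pos (by linarith : (0:ℝ) < Rr)]
    rw [h1]
    have hfac : 0 < (τ*Rr - |Ii|) * (τ*Rr + |Ii| + 2*Rr) := by
      apply mul_pos (by linarith) (by positivity)
    nlinarith [_root_.sq_abs Ii]
  · refine ⟨2*Rr*c/N, by positivity, ?_⟩
    rw [hzim, hIi]
    ring

lemma arg_cone {q : ℂ} (hre : 0 < q.re) (him : |q.im| < q.re) :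
    |q.arg| < π/4 := by
  have h2 : |q.arg| < π/2 := Complex.abs_arg_lt_pi_div_two_iff.2 (Or.inl hre)
  have ht : Real.tan q.arg = q.im / q.re := Complex.tan_arg q
  have htlt : |Real.tan q.arg| < 1 := by
    rw [ht, abs_div, abs_of_pos hre]; rw [div_lt_one hre]; exact him
  by_contra hc
  push_neg at hc
  rcases le_or_gt 0 q.arg with h0 | h0
  · have h3 : π/4 ≤ q.arg := by rwa [_root_.abs_of_nonneg h0] at hc
    have h4 : Real.tan (π/4) ≤ Real.tan q.arg := by
      rcases eq_or_lt_of_le h3 with h | h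
      · rw [h]
      · exact le_of_lt (Real.tan_lt_tan_of_nonneg_of_lt_pi_div_two (by positivity)
          (abs_lt.1 h2).2 h)
    rw [Real.tan_pi_div_four] at h4
    have := le_abs_self (Real.tan q.arg); linarith
  · have h3 : q.arg ≤ -(π/4) := by rw [abs_of_neg h0] at hc; linarith
    have h4 : Real.tan q.arg ≤ Real.tan (-(π/4)) := by
      rcases eq_or_lt_of_le h3 with h | h
      · rw [h]
      · refine le_of_lt (Real.tan_lt_tan_of_lt_of_lt_pi_div_two (abs_lt.1 h2).1 ?_ h)
        linarith [Real.pi_pos]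
    rw [Real.tan_neg, Real.tan_pi_div_four] at h4
    have := neg_abs_le (Real.tan q.arg); linarith

lemma rho_bounds (γ : ℝ) (hγ : 0 < γ) (ρ : ℝ → ℝ) (hρ : ContDiff ℝ (⊤ : ℕ∞) ρ)
    (hρ0 : ∃ t₀ > 0, ∀ t ≤ t₀, ρ t = 0)
    (hρ' : ∀ t ≥ (0:ℝ), 0 ≤ deriv ρ t ∧ deriv ρ t < γ⁻¹ * Real.tan (π/8))
    (r : ℝ) (hr : 0 < r) :
    0 ≤ ρ r / r ∧ ρ r / r < γ⁻¹ * Real.tan (π/8) := by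
  obtain ⟨t₀, ht₀, h0⟩ := hρ0
  have hρ00 : ρ 0 = 0 := h0 0 ht₀.le
  have hdiff : Differentiable ℝ ρ := hρ.differentiable (by simp)
  have hmono : MonotoneOn ρ (Set.Ici 0) := by
    apply monotoneOn_of_deriv_nonneg (convex_Ici 0) hρ.continuous.continuousOn
    · exact fun x _ => (hdiff x).differentiableWithinAt
    · intro x hx
      rw [interior_Ici] at hx
      exact (hρ' x (le_of_lt hx)).1
  have hrnn : 0 ≤ ρ r := by
    have := hmono (Set.mem_Ici.2 le_rfl) (Set.mem_Ici.2 hr.le) hr.le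
    rwa [hρ00] at this
  constructor
  · exact div_nonneg hrnn hr.le
  · set c := γ⁻¹ * Real.tan (π/8) with hc
    have hcpos : 0 < c := mul_pos (inv_pos.2 hγ) tau_pos
    set g : ℝ → ℝ := fun t => c * t - ρ t with hg
    have hgmono : StrictMonoOn g (Set.Ici 0) := by
      apply strictMonoOn_of_deriv_pos (convex_Ici 0)
      · exact (continuous_const.mul continuous_id).sub hρ.continuous |>.continuousOn
      · intro x hx
        rw [interior_Ici] at hx
        have h1 : HasDerivAt g (c - deriv ρ x) x := by
          have := ((hasDerivAt_id x).const_mul c).sub (hdiff x).hasDerivAt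
          rw [mul_one] at this; exact this
        rw [h1.deriv]
        have := (hρ' x (le_of_lt hx)).2
        linarith
    have := hgmono (Set.mem_Ici.2 le_rfl) (Set.mem_Ici.2 hr.le) hr
    simp only [hg, hρ00, mul_zero, sub_zero] at this
    rw [div_lt_iff₀ hr]
    linarith

def Pmat {n : ℕ} (ξ : Rn n) : Matrix (Fin n) (Fin n) ℂ := Matrix.of fun i j => (ξ i : ℂ) * ξ j

-- norms and inner products as sums
lemma sum_sq_eq_norm {n : ℕ} (ξ : Rn n) : ∑ k, (ξ k)^2 = ‖ξ‖^2 := by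
  rw [EuclideanSpace.norm_eq, Real.sq_sqrt (by positivity)]
  simp [Real.norm_eq_abs, sq_abs]

lemma inner_eq_sum {n : ℕ} (ξ v : Rn n) : (inner ℝ ξ v : ℝ) = ∑ k, ξ k * v k := by
  simp [PiLp.inner_apply, RCLike.inner_apply, mul_comm]

lemma sum_sq_eq_normC {n : ℕ} (ξ : Rn n) : ∑ k, (ξ k:ℂ)^2 = ((‖ξ‖^2 : ℝ) : ℂ) := by
  rw [← sum_sq_eq_norm]; push_cast; rfl

lemma DphiMat_eq {n : ℕ} (ρ : ℝ → ℝ) (θ : ℂ) (ξ : Rn n) (hξ : ξ ≠ 0) :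
    DphiMat ρ θ ξ = (1 + θ * ((ρ ‖ξ‖ / ‖ξ‖ : ℝ):ℂ)) • (1 : Matrix (Fin n) (Fin n) ℂ)
      + (θ * ((deriv ρ ‖ξ‖ / ‖ξ‖ ^ 2 - ρ ‖ξ‖ / ‖ξ‖ ^ 3 : ℝ):ℂ)) • Pmat ξ := by
  ext i j
  simp only [DphiMat, DpsiMat, if_neg hξ, Matrix.add_apply, Matrix.smul_apply, Matrix.map_apply,
    Matrix.one_apply, Pmat, Matrix.of_apply, smul_eq_mul]
  by_cases h : i = j <;> simp [h] <;> push_cast <;> ring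

lemma Pmat_mul_Pmat {n : ℕ} (ξ : Rn n) :
    Pmat ξ * Pmat ξ = (∑ k, (ξ k:ℂ)^2) • Pmat ξ := by
  ext i j
  simp [Pmat, Matrix.mul_apply, Finset.sum_mul, Finset.mul_sum]
  ring_nf
  apply Finset.sum_congr rfl
  intro k _
  ring

lemma dot_trans {n : ℕ} (A B : Matrix (Fin n) (Fin n) ℂ) (v w : Fin n → ℂ) :
    dotC ((A.transpose * B).mulVec v) w = dotC (B.mulVec v) (A.mulVec w) := by
  have hd : ∀ (u w : Fin n → ℂ), dotC u w = dotProduct u w := fun _ _ => rfl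
  rw [hd, hd, ← Matrix.mulVec_mulVec, Matrix.mulVec_transpose, ← Matrix.dotProduct_mulVec]

lemma smul_one_add_smul_P_mul {n : ℕ} (ξ : Rn n) (a b c d : ℂ) :
    (a • (1 : Matrix (Fin n) (Fin n) ℂ) + b • Pmat ξ) * (c • 1 + d • Pmat ξ)
      = (a*c) • 1 + (a*d + b*c + b*d*(∑ k, (ξ k:ℂ)^2)) • Pmat ξ := by
  simp only [Matrix.add_mul, Matrix.mul_add, Matrix.smul_mul, Matrix.mul_smul,
    Matrix.one_mul, Matrix.mul_one, Pmat_mul_Pmat, smul_smul]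
  module

lemma inv_formula {n : ℕ} (ξ : Rn n) (α β : ℂ) (hα : α ≠ 0)
    (hμ : α + β * (∑ k, (ξ k:ℂ)^2) ≠ 0) :
    (α • (1 : Matrix (Fin n) (Fin n) ℂ) + β • Pmat ξ)⁻¹
      = α⁻¹ • 1 + (-β/(α*(α + β * (∑ k, (ξ k:ℂ)^2)))) • Pmat ξ := by
  apply Matrix.inv_eq_right_inv
  rw [smul_one_add_smul_P_mul]
  have h1 : α * α⁻¹ = 1 := mul_inv_cancel₀ hα
  have h2 : α * (-β/(α*(α + β * (∑ k, (ξ k:ℂ)^2)))) + β * α⁻¹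
      + β * (-β/(α*(α + β * (∑ k, (ξ k:ℂ)^2)))) * (∑ k, (ξ k:ℂ)^2) = 0 := by
    field_simp
    ring
  rw [h1, h2]
  simp

lemma mulVec_form {n : ℕ} (ξ : Rn n) (c d : ℂ) (v : Fin n → ℂ) :
    (c • (1 : Matrix (Fin n) (Fin n) ℂ) + d • Pmat ξ).mulVec v
      = fun j => c * v j + d * (∑ k, (ξ k:ℂ) * v k) * ξ j := by
  ext j
  simp [Matrix.mulVec, dotProduct, Pmat, Matrix.one_apply, mul_add, add_mul,
    Finset.sum_add_distrib, Finset.mul_sum]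
  rw [Finset.sum_mul]
  apply Finset.sum_congr rfl; intro k _; ring

lemma expand_sq_sum {n : ℕ} (a b : ℂ) (f g : Fin n → ℂ) :
    ∑ j, (a * f j + b * g j) * (a * f j + b * g j)
      = a^2 * (∑ j, (f j)^2) + 2*a*b*(∑ j, g j * f j) + b^2 * (∑ j, (g j)^2) := by
  rw [Finset.mul_sum, Finset.mul_sum, Finset.mul_sum, ← Finset.sum_add_distrib,
    ← Finset.sum_add_distrib]
  apply Finset.sum_congr rfl; intro j _; ring

lemma key_alg (α μ r2 S d : ℂ) (hα : α ≠ 0) (hμ : μ ≠ 0) (hr2 : r2 ≠ 0) :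
    α⁻¹^2*S + 2*α⁻¹*((-((μ-α)/r2)/(α*μ))*d)*d + ((-((μ-α)/r2)/(α*μ))*d)^2*r2
      = (S - d^2/r2)*(α^2)⁻¹ + (d^2/r2)*(μ^2)⁻¹ := by
  field_simp
  have hD : (α ^ 2 * (α * (r2 * (α * μ)))) ≠ 0 :=
    mul_ne_zero (pow_ne_zero _ hα) (mul_ne_zero hα (mul_ne_zero hr2 (mul_ne_zero hα hμ)))
  ring

/-- The main computation: `qForm = s (α²)⁻¹ + t (μ²)⁻¹`. -/
lemma qForm_eq {n : ℕ} (ρ : ℝ → ℝ) (θ : ℂ) (ξ ξs : Rn n) (hξ : ξ ≠ 0)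
    (hα : (1 + θ * ((ρ ‖ξ‖ / ‖ξ‖ : ℝ):ℂ)) ≠ 0)
    (hμ : (1 + θ * ((deriv ρ ‖ξ‖ : ℝ):ℂ)) ≠ 0) :
    qForm ρ θ ξ ξs
      = ((‖ξs‖^2 - (∑ k, ξ k * ξs k)^2 / ‖ξ‖^2 : ℝ) : ℂ) * ((1 + θ * ((ρ ‖ξ‖ / ‖ξ‖ : ℝ):ℂ))^2)⁻¹
        + (((∑ k, ξ k * ξs k)^2 / ‖ξ‖^2 : ℝ) : ℂ) * ((1 + θ * ((deriv ρ ‖ξ‖ : ℝ):ℂ))^2)⁻¹ := by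
  have hr : (0:ℝ) < ‖ξ‖ := norm_pos_iff.2 hξ
  set r : ℝ := ‖ξ‖
  set α : ℂ := 1 + θ * ((ρ r / r : ℝ):ℂ) with hαdef
  set β : ℂ := θ * ((deriv ρ r / r ^ 2 - ρ r / r ^ 3 : ℝ):ℂ) with hβdef
  have hr2 : (∑ k, (ξ k:ℂ)^2) = ((r^2 : ℝ) : ℂ) := sum_sq_eq_normC ξ
  have hr2ne : ((r^2:ℝ):ℂ) ≠ 0 := by
    simp only [ne_eq, Complex.ofReal_eq_zero]; positivity
  -- μ = α + β r² = 1 + θ ρ'(r)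
  have hμeq : α + β * (∑ k, (ξ k:ℂ)^2) = 1 + θ * ((deriv ρ r : ℝ):ℂ) := by
    rw [hr2, hαdef, hβdef]
    push_cast
    have : (r:ℂ) ≠ 0 := by simpa using hr.ne'
    field_simp
    ring
  have hμ' : α + β * (∑ k, (ξ k:ℂ)^2) ≠ 0 := by rw [hμeq]; exact hμ
  -- rewrite the inverse
  have hD : DphiMat ρ θ ξ = α • (1 : Matrix (Fin n) (Fin n) ℂ) + β • Pmat ξ :=
    DphiMat_eq ρ θ ξ hξ
  set δ : ℂ := -β/(α*(α + β * (∑ k, (ξ k:ℂ)^2))) with hδdef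
  have hinv : (DphiMat ρ θ ξ)⁻¹ = α⁻¹ • 1 + δ • Pmat ξ := by
    rw [hD]; exact inv_formula ξ α β hα hμ'
  set v : Fin n → ℂ := fun j => (ξs j : ℂ) with hv
  have hq : qForm ρ θ ξ ξs = dotC (((DphiMat ρ θ ξ)⁻¹).mulVec v) (((DphiMat ρ θ ξ)⁻¹).mulVec v) :=
    dot_trans _ _ v v
  set d : ℂ := ∑ k, (ξ k:ℂ) * v k with hd
  have hdR : d = ((∑ k, ξ k * ξs k : ℝ) : ℂ) := by rw [hd]; push_cast; rfl
  have hSR : (∑ j, (v j)^2) = ((‖ξs‖^2:ℝ):ℂ) := sum_sq_eq_normC ξs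
  rw [hq, hinv, mulVec_form]
  have : dotC (fun j => α⁻¹ * v j + δ * d * ξ j) (fun j => α⁻¹ * v j + δ * d * ξ j)
      = (α⁻¹)^2 * (∑ j, (v j)^2) + 2*α⁻¹*(δ*d)*(∑ j, (ξ j:ℂ) * v j)
        + (δ*d)^2 * (∑ j, (ξ j:ℂ)^2) := by
    rw [dotC]
    exact expand_sq_sum α⁻¹ (δ*d) v (fun j => (ξ j:ℂ))
  rw [this, ← hd, hr2, hSR, hδdef, hμeq]
  set μ : ℂ := 1 + θ * ((deriv ρ r : ℝ):ℂ)
  rw [hdR]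
  set dR : ℝ := ∑ k, ξ k * ξs k
  have hrc : ((r^2:ℝ):ℂ) ≠ 0 := hr2ne
  have hμ2 : α + β * ((r^2:ℝ):ℂ) = μ := by rw [← hr2]; exact hμeq
  have hβ' : β = (μ - α) / ((r^2:ℝ):ℂ) := by
    rw [eq_div_iff hrc, mul_comm]
    rw [← hμ2]; ring
  have hco1 : ((‖ξs‖^2 - dR^2/r^2 : ℝ):ℂ) = ((‖ξs‖^2:ℝ):ℂ) - ((dR:ℝ):ℂ)^2/((r^2:ℝ):ℂ) := by
    push_cast; ring
  have hco2 : ((dR^2/r^2 : ℝ):ℂ) = ((dR:ℝ):ℂ)^2/((r^2:ℝ):ℂ) := by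
    push_cast; ring
  rw [hβ', hco1, hco2]
  exact key_alg α μ _ _ _ hα hμ hrc


set_option maxHeartbeats 1000000 in
lemma master_qform {n : ℕ} (γ : ℝ) (hγ : 0 < γ) (ρ : ℝ → ℝ) (hρ : ContDiff ℝ (⊤ : ℕ∞) ρ)
    (hρ0 : ∃ t₀ > 0, ∀ t ≤ t₀, ρ t = 0)
    (hρ' : ∀ t ≥ (0:ℝ), 0 ≤ deriv ρ t ∧ deriv ρ t < γ⁻¹ * Real.tan (π/8))
    (θ : ℂ) (hθ : θ ∈ Dgamma γ) (ξ : Rn n) (hξ : ξ ≠ 0) (ξs : Rn n) :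
    ((0 ≤ θ.im → 0 ≤ -(qForm ρ θ ξ ξs).arg ∧ -(qForm ρ θ ξ ξs).arg < π/4) ∧
     (θ.im ≤ 0 → 0 ≤ (qForm ρ θ ξ ξs).arg ∧ (qForm ρ θ ξ ξs).arg < π/4)) ∧
    1/16 * ‖ξs‖^2 ≤ ‖qForm ρ θ ξ ξs‖ := by
  have hr : (0:ℝ) < ‖ξ‖ := norm_pos_iff.2 hξ
  have hθ' : |θ.re| + |θ.im| < γ := hθ
  obtain ⟨ha0, ha1⟩ := rho_bounds γ hγ ρ hρ hρ0 hρ' ‖ξ‖ hr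
  obtain ⟨hb0, hb1⟩ := hρ' ‖ξ‖ hr.le
  obtain ⟨hane, hare, haim, ka, hka, hkaim⟩ := z_props γ hγ θ hθ' _ ha0 ha1
  obtain ⟨hbne, hbre, hbim, kb, hkb, hkbim⟩ := z_props γ hγ θ hθ' _ hb0 hb1
  set z1 : ℂ := ((1 + θ*((ρ ‖ξ‖ / ‖ξ‖ : ℝ):ℂ))^2)⁻¹ with hz1
  set z2 : ℂ := ((1 + θ*((deriv ρ ‖ξ‖ : ℝ):ℂ))^2)⁻¹ with hz2
  set d : ℝ := ∑ k, ξ k * ξs k with hd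
  set s : ℝ := ‖ξs‖^2 - d^2/‖ξ‖^2 with hs
  set t : ℝ := d^2/‖ξ‖^2 with htdef
  set q : ℂ := qForm ρ θ ξ ξs with hqdef
  have hq : q = (s:ℂ) * z1 + (t:ℂ) * z2 := qForm_eq ρ θ ξ ξs hξ hane hbne
  have hCS : d^2 ≤ ‖ξ‖^2 * ‖ξs‖^2 := by
    have h1 : |(inner ℝ ξ ξs : ℝ)| ≤ ‖ξ‖ * ‖ξs‖ := abs_real_inner_le_norm ξ ξs
    have h2 : d = (inner ℝ ξ ξs : ℝ) := (inner_eq_sum ξ ξs).symm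
    calc d^2 = |d|^2 := (_root_.sq_abs d).symm
    _ ≤ (‖ξ‖*‖ξs‖)^2 := by rw [h2]; exact pow_le_pow_left₀ (abs_nonneg _) h1 2
    _ = ‖ξ‖^2*‖ξs‖^2 := by ring
  have ht0 : 0 ≤ t := by rw [htdef]; positivity
  have hs0 : 0 ≤ s := by
    rw [hs, sub_nonneg, div_le_iff₀ (by positivity : (0:ℝ) < ‖ξ‖^2)]
    nlinarith
  have hst : s + t = ‖ξs‖^2 := by rw [hs, htdef]; ring
  have hqre : q.re = s * z1.re + t * z2.re := by
    rw [hq]; simp [Complex.add_re, Complex.mul_re]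
  have hqim : q.im = s * z1.im + t * z2.im := by
    rw [hq]; simp [Complex.add_im, Complex.mul_im]
  clear_value z1 z2 q
  have hrelb : 1/16 * ‖ξs‖^2 ≤ q.re := by
    rw [hqre, ← hst]
    nlinarith [mul_le_mul_of_nonneg_left hare hs0, mul_le_mul_of_nonneg_left hbre ht0]
  refine ⟨?_, le_trans hrelb (Complex.re_le_norm q)⟩
  by_cases hzero : s + t = 0
  · -- degenerate case q = 0
    have hs' : s = 0 := by linarith
    have ht' : t = 0 := by linarith
    have hq0 : q = 0 := by rw [hq, hs', ht']; simp
    rw [hq0, Complex.arg_zero]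
    have hπ : 0 < π/4 := by positivity
    exact ⟨fun _ => ⟨by norm_num, by simpa using hπ⟩, fun _ => ⟨le_refl 0, hπ⟩⟩
  · have hpos : 0 < s + t := lt_of_le_of_ne (by positivity) (Ne.symm hzero)
    have hqre_pos : 0 < q.re := by
      have : 0 < 1/16 * ‖ξs‖^2 := by rw [← hst]; positivity
      linarith
    have hqim_abs : |q.im| < q.re := by
      rw [hqim, hqre]
      have h1 : |s*z1.im + t*z2.im| ≤ s*|z1.im| + t*|z2.im| := by
        refine (abs_add_le _ _).trans ?_
        rw [abs_mul, abs_mul, _root_.abs_of_nonneg hs0, _root_.abs_of_nonneg ht0]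
      rcases lt_or_ge 0 s with hsp | hsn
      · have e1 : s*|z1.im| < s*z1.re := by nlinarith
        have e2 : t*|z2.im| ≤ t*z2.re := by nlinarith
        linarith
      · have hseq : s = 0 := le_antisymm hsn hs0
        have htpos : 0 < t := by rw [hseq] at hpos; linarith
        have e1 : t*|z2.im| < t*z2.re := by nlinarith
        rw [hseq] at h1 ⊢
        simp only [zero_mul, zero_add] at h1 ⊢
        linarith
    have harg : |q.arg| < π/4 := arg_cone hqre_pos hqim_abs
    have hsign : q.im = -(s*ka + t*kb) * θ.im := by rw [hqim, hkaim, hkbim]; ring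
    have hknn : 0 ≤ s*ka + t*kb := by positivity
    constructor
    · intro hthim
      have him0 : q.im ≤ 0 := by rw [hsign]; nlinarith
      have harg0 : q.arg ≤ 0 := by
        rcases him0.lt_or_eq with h | h
        · exact le_of_lt (Complex.arg_neg_iff.2 h)
        · rw [Complex.arg_eq_zero_iff.2 ⟨hqre_pos.le, h⟩]
      exact ⟨by linarith, by have := neg_abs_le q.arg; linarith [abs_lt.1 harg]⟩
    · intro hthim
      have him0 : 0 ≤ q.im := by rw [hsign]; nlinarith
      have harg0 : 0 ≤ q.arg := Complex.arg_nonneg_iff.2 him0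
      exact ⟨harg0, by linarith [(abs_lt.1 harg).2, le_abs_self q.arg]⟩

/-- equations (3.17)–(3.19) of the paper.  For the quadratic form
`q = (Dφ_θ(ξ)⁻² ξ*)·ξ*` with `Dφ_θ⁻² = (Dφ_θ⁻¹)ᵀ Dφ_θ⁻¹`:
(i) if `±Im θ ≥ 0` then `0 ≤ ∓arg q < π/4`;
(ii) there is `C > 0`, depending only on `γ` and the bounds on `ρ'`, with
`|q| ≥ C|ξ*|²`. -/
theorem qForm_arg_and_lower_bound
    (n : ℕ) (γ : ℝ) (hγ : 0 < γ)
    (ρ : ℝ → ℝ) (hρ : ContDiff ℝ (⊤ : ℕ∞) ρ)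
    (hρ0 : ∃ t₀ > 0, ∀ t ≤ t₀, ρ t = 0)
    (hρ1 : ∃ t₁ : ℝ, ∀ t ≥ t₁, ρ t = 1)
    (hρ' : ∀ t ≥ (0:ℝ), 0 ≤ deriv ρ t ∧ deriv ρ t < γ⁻¹ * Real.tan (π/8)) :
    (∀ θ ∈ Dgamma γ, ∀ ξ : Rn n, ξ ≠ 0 → ∀ ξs : Rn n,
        (0 ≤ θ.im →
          0 ≤ -(qForm ρ θ ξ ξs).arg ∧ -(qForm ρ θ ξ ξs).arg < π/4) ∧
        (θ.im ≤ 0 →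
          0 ≤ (qForm ρ θ ξ ξs).arg ∧ (qForm ρ θ ξ ξs).arg < π/4))
      ∧ ∃ C > 0, ∀ θ ∈ Dgamma γ, ∀ ξ : Rn n, ξ ≠ 0 → ∀ ξs : Rn n,
          C * ‖ξs‖ ^ 2 ≤ ‖qForm ρ θ ξ ξs‖ := by
  constructor
  · intro θ hθ ξ hξ ξs
    exact (master_qform γ hγ ρ hρ hρ0 hρ' θ hθ ξ hξ ξs).1
  · refine ⟨1/16, by norm_num, fun θ hθ ξ hξ ξs => ?_⟩
    have := (master_qform γ hγ ρ hρ hρ0 hρ' θ hθ ξ hξ ξs).2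
    linarith
end
end

section
/- Let γ > 0 and ρ ∈ C^∞([0,∞);ℝ) with ρ ≡ 0 near 0, ρ ≡ 1 for large argument, and 0 ≤ ρ'(t) < γ^{-1} tan(π/8). Let β > 0 with βρ'(t) ≤ tan(π/8) for all t, and let Ω ⋐ {x+iy : x > 0, y > -βρ(x)} be a bounded set. Then there exists δ > 0 such that for all λ ∈ Ω and all ξ ∈ ℝⁿ, the argument of (|ξ| - iβρ(|ξ|))² - λ² satisfies arg((|ξ| - iβρ(|ξ|))² - λ²) ≤ π/2 - δ or ≥ 3π/4 + δ. -/
set_option maxHeartbeats 1000000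


open MeasureTheory Complex Real Filter Metric
open scoped Classical

noncomputable section

/-- Auxiliary: a function with nonnegative derivative on `(0,∞)` is monotone on `[0,∞)`. -/
lemma mono_aux (f f' : ℝ → ℝ) (hd : ∀ s, HasDerivAt f (f' s) s)
    (hpos : ∀ s, 0 < s → 0 ≤ f' s) : MonotoneOn f (Set.Ici 0) := by
  apply monotoneOn_of_deriv_nonneg (convex_Ici 0)
  · exact fun s _ => (hd s).continuousAt.continuousWithinAt
  · exact fun s _ => (hd s).differentiableAt.differentiableWithinAt
  · intro s hs
    rw [interior_Ici] at hs
    rw [(hd s).deriv]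
    exact hpos s hs

/-- equation (3.22), the "argument claim", of the paper.  Under the
stated conditions on `ρ`, `β` and the bounded set `Ω ⋐ {x+iy : x > 0, y > -βρ(x)}`,
there is `δ > 0` such that for all `λ ∈ Ω` and `ξ ∈ ℝⁿ` the argument of
`(|ξ| - iβρ(|ξ|))² - λ²` is `≤ π/2 - δ` or `≥ 3π/4 + δ`. -/
theorem argument_claim
    (n : ℕ) (γ β : ℝ) (hγ : 0 < γ) (hβ : 0 < β)
    (ρ : ℝ → ℝ) (hρ : ContDiff ℝ (⊤ : ℕ∞) ρ)
    (hρ0 : ∃ t₀ > 0, ∀ t ≤ t₀, ρ t = 0)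
    (hρ1 : ∃ t₁ : ℝ, ∀ t ≥ t₁, ρ t = 1)
    (hρ' : ∀ t ≥ (0:ℝ), 0 ≤ deriv ρ t ∧ deriv ρ t < γ⁻¹ * Real.tan (π/8))
    (hβρ' : ∀ t ≥ (0:ℝ), β * deriv ρ t ≤ Real.tan (π/8))
    (Ω : Set ℂ) (hΩbd : Bornology.IsBounded Ω)
    (hΩ : closure Ω ⊆ {z : ℂ | 0 < z.re ∧ -β * ρ z.re < z.im}) :
    ∃ δ > 0, ∀ lam ∈ Ω, ∀ ξ : Rn n,
      ((((‖ξ‖ : ℂ) - Complex.I * β * ((ρ ‖ξ‖ : ℝ) : ℂ)) ^ 2 - lam ^ 2).arg ≤ π/2 - δ) ∨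
      (3*π/4 + δ ≤ (((‖ξ‖ : ℂ) - Complex.I * β * ((ρ ‖ξ‖ : ℝ) : ℂ)) ^ 2 - lam ^ 2).arg) := by
  rcases Set.eq_empty_or_nonempty Ω with rfl | hne
  · exact ⟨1, one_pos, by simp⟩
  have hπ : (0:ℝ) < π := Real.pi_pos
  set c : ℝ := Real.tan (π/8) with hcdef
  have hπ8 : (0:ℝ) < π/8 := by linarith
  have hcpos : 0 < c := Real.tan_pos_of_pos_of_lt_pi_div_two hπ8 (by linarith)
  have hclt1 : c < 1 := by
    have h := Real.tan_lt_tan_of_nonneg_of_lt_pi_div_two (le_of_lt hπ8)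
      (by linarith : π/4 < π/2) (by linarith : π/8 < π/4)
    rwa [Real.tan_pi_div_four] at h
  have hc2 : c ^ 2 + 2 * c = 1 := by
    have h := Real.tan_two_mul (x := π/8)
    rw [show 2 * (π/8) = π/4 by ring, Real.tan_pi_div_four] at h
    have h1 : 1 - c ^ 2 > 0 := by nlinarith
    rw [← hcdef] at h
    field_simp at h
    nlinarith
  -- differentiability of ρ
  have hρd : Differentiable ℝ ρ := hρ.differentiable (by simp)
  have hρ00 : ρ 0 = 0 := by
    obtain ⟨t₀, ht₀, h0⟩ := hρ0
    exact h0 0 (le_of_lt ht₀)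
  -- the function g = β ρ
  have hgd : ∀ s : ℝ, HasDerivAt (fun x => β * ρ x) (β * deriv ρ s) s :=
    fun s => ((hρd s).hasDerivAt).const_mul β
  -- g is monotone on [0,∞)
  have hg_mono : MonotoneOn (fun x => β * ρ x) (Set.Ici 0) := by
    apply mono_aux _ _ hgd
    intro s hs
    exact mul_nonneg hβ.le (hρ' s hs.le).1
  have hg_nonneg : ∀ s : ℝ, 0 ≤ s → 0 ≤ β * ρ s := by
    intro s hs
    have := hg_mono (Set.self_mem_Ici) hs hs
    simpa [hρ00] using this
  -- g s ≤ c s on [0,∞)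
  have hg_lin : ∀ s : ℝ, 0 ≤ s → β * ρ s ≤ c * s := by
    intro s hs
    have hmono : MonotoneOn (fun x => c * x - β * ρ x) (Set.Ici 0) := by
      apply mono_aux _ (fun x => c - β * deriv ρ x)
      · intro x
        exact ((hasDerivAt_id' x).const_mul c).sub (hgd x) |>.congr_deriv (by ring)
      · intro x hx
        have := hβρ' x hx.le
        linarith
    have := hmono (Set.self_mem_Ici) hs hs
    simp only [mul_zero, hρ00, sub_zero] at this
    linarith
  -- the key monotone quantity H(s) = s² - 2 s g(s) - g(s)²
  have hH_mono : MonotoneOn (fun s => s ^ 2 - 2 * (s * (β * ρ s)) - (β * ρ s) ^ 2)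
      (Set.Ici 0) := by
    apply mono_aux _
      (fun s => 2 * s - 2 * (1 * (β * ρ s) + s * (β * deriv ρ s))
        - (2 * (β * ρ s) ^ 1 * (β * deriv ρ s)))
    · intro s
      have p1 : HasDerivAt (fun x : ℝ => x ^ 2) (2 * s) s := by
        simpa using hasDerivAt_pow 2 s
      have p2 : HasDerivAt (fun x => x * (β * ρ x))
          (1 * (β * ρ s) + s * (β * deriv ρ s)) s := (hasDerivAt_id' s).mul (hgd s)
      exact (p1.sub (p2.const_mul 2)).sub ((hgd s).pow 2)
    · intro s hs
      set G := β * ρ s with hG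
      set G' := β * deriv ρ s with hG'
      have h1 : G ≤ c * s := hg_lin s hs.le
      have h2 : 0 ≤ G := hg_nonneg s hs.le
      have h3 : 0 ≤ G' := mul_nonneg hβ.le (hρ' s hs.le).1
      have h4 : G' ≤ c := hβρ' s hs.le
      have hA : 0 ≤ (c * s - G) * (1 + G') :=
        mul_nonneg (by linarith) (by linarith)
      have hB : 0 ≤ s * (1 + c) * (c - G') :=
        mul_nonneg (mul_nonneg hs.le (by linarith)) (by linarith)
      nlinarith [hA, hB]
  -- compactness data
  obtain ⟨M, hM⟩ := Bornology.IsBounded.exists_norm_le hΩbd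
  obtain ⟨lam₀, hlam₀⟩ := hne
  have hMpos : 0 < M := by
    have h1 : 0 < lam₀.re := (hΩ (subset_closure hlam₀)).1
    have h2 : lam₀.re ≤ ‖lam₀‖ := Complex.re_le_norm lam₀
    have := hM lam₀ hlam₀
    linarith
  have hKc : IsCompact (closure Ω) := hΩbd.isCompact_closure
  have hFcont : Continuous fun z : ℂ => z.im + β * ρ z.re :=
    Complex.continuous_im.add (continuous_const.mul (hρ.continuous.comp Complex.continuous_re))
  obtain ⟨z₀, hz₀K, hz₀min⟩ := hKc.exists_isMinOn ⟨lam₀, subset_closure hlam₀⟩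
    hFcont.continuousOn
  set ε : ℝ := z₀.im + β * ρ z₀.re with hεdef
  have hεpos : 0 < ε := by
    have := hΩ hz₀K
    have h2 := this.2
    rw [hεdef]; linarith
  -- the constant k and δ
  set k : ℝ := c * M / (c * M + ε) with hkdef
  have hcM : 0 < c * M := mul_pos hcpos hMpos
  have hk0 : 0 < k := div_pos hcM (by linarith)
  have hk1 : k < 1 := (div_lt_one (by linarith)).2 (by linarith)
  refine ⟨π/4 - Real.arctan k, ?_, ?_⟩
  · have : Real.arctan k < Real.arctan 1 := Real.arctan_strictMono hk1
    rw [Real.arctan_one] at this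
    linarith
  intro lam hlam ξ
  have harct_pos : 0 < Real.arctan k := by
    have := Real.arctan_strictMono hk0
    rwa [Real.arctan_zero] at this
  have harct_lt : Real.arctan k < π/4 := by
    have := Real.arctan_strictMono hk1
    rwa [Real.arctan_one] at this
  set t : ℝ := ‖ξ‖ with htdef
  have ht : 0 ≤ t := norm_nonneg ξ
  set a : ℝ := lam.re with hadef
  set b : ℝ := lam.im with hbdef
  have ha : 0 < a := (hΩ (subset_closure hlam)).1
  have haM : a ≤ M := le_trans (Complex.re_le_norm lam) (hM lam hlam)
  have hbe : ε ≤ b + β * ρ a := isMinOn_iff.mp hz₀min lam (subset_closure hlam)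
  set w : ℂ := ((t : ℂ) - Complex.I * (β:ℂ) * ((ρ t : ℝ) : ℂ)) ^ 2 - lam ^ 2 with hwdef
  have hwre : w.re = t ^ 2 - (β * ρ t) ^ 2 - (a ^ 2 - b ^ 2) := by
    simp only [hwdef, pow_two, Complex.sub_re, Complex.mul_re, Complex.mul_im,
      Complex.sub_im, Complex.I_re, Complex.I_im, Complex.ofReal_re, Complex.ofReal_im,
      hadef, hbdef]
    ring
  have hwim : w.im = -(2 * (t * (β * ρ t))) - 2 * (a * b) := by
    simp only [hwdef, pow_two, Complex.sub_re, Complex.mul_re, Complex.mul_im,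
      Complex.sub_im, Complex.I_re, Complex.I_im, Complex.ofReal_re, Complex.ofReal_im,
      hadef, hbdef]
    ring
  have hgt0 : 0 ≤ β * ρ t := hg_nonneg t ht
  have hga0 : 0 ≤ β * ρ a := hg_nonneg a ha.le
  rcases le_or_gt w.im 0 with him | him
  · -- im w ≤ 0 : easy cases
    rcases lt_or_eq_of_le him with him' | him'
    · left
      have : w.arg < 0 := Complex.arg_neg_iff.mpr him'
      linarith
    · -- im w = 0, w is real
      have hwr : w = ((w.re : ℝ) : ℂ) := by
        apply Complex.ext <;> simp [him'.symm]
      rcases le_or_gt 0 w.re with hre | hre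
      · left
        rw [hwr, Complex.arg_ofReal_of_nonneg hre]
        linarith
      · right
        rw [hwr, Complex.arg_ofReal_of_neg hre]
        linarith
  · -- im w > 0 : the main case
    have hab : a * b < -(t * (β * ρ t)) := by
      rw [hwim] at him; linarith
    have hb : b < 0 := by
      rcases le_or_gt 0 b with hb' | hb'
      · exfalso
        have h1 : 0 ≤ a * b := mul_nonneg ha.le hb'
        have h2 : 0 ≤ t * (β * ρ t) := mul_nonneg ht hgt0
        linarith
      · exact hb'
    have hyga : -b + ε ≤ β * ρ a := by linarith
    -- t < a
    have hta : t ≤ a := by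
      by_contra hta'
      push_neg at hta'
      have h1 : β * ρ a ≤ β * ρ t := hg_mono (Set.mem_Ici.2 ha.le) (Set.mem_Ici.2 ht) hta'.le
      have h2 : a * (β * ρ a) ≤ t * (β * ρ t) :=
        mul_le_mul hta'.le h1 hga0 (by linarith)
      nlinarith
    -- H t ≤ H a
    have hHta : t ^ 2 - 2 * (t * (β * ρ t)) - (β * ρ t) ^ 2
        ≤ a ^ 2 - 2 * (a * (β * ρ a)) - (β * ρ a) ^ 2 :=
      hH_mono (Set.mem_Ici.2 ht) (Set.mem_Ici.2 ha.le) hta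
    -- key inequality: -re w ≥ im w + 2 a ε
    have hkey : w.im + 2 * a * ε ≤ -w.re := by
      rw [hwre, hwim]
      nlinarith [hHta, mul_nonneg ha.le (by linarith : (0:ℝ) ≤ β * ρ a + b - ε),
        mul_nonneg (by linarith : (0:ℝ) ≤ β * ρ a + b)
          (by linarith : (0:ℝ) ≤ β * ρ a - b)]
    have hQ : w.im ≤ 2 * a * (c * M) := by
      rw [hwim]
      have h1 : β * ρ a ≤ c * a := hg_lin a ha.le
      have h2 : c * a ≤ c * M := by nlinarith
      have h3 : 0 ≤ t * (β * ρ t) := mul_nonneg ht hgt0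
      nlinarith
    have hrneg : w.re < 0 := by nlinarith [mul_pos ha hεpos]
    -- ratio bound: im w / (-re w) ≤ k
    have hratio : w.im * (c * M + ε) ≤ (-w.re) * (c * M) := by
      nlinarith [mul_pos ha hεpos]
    right
    have hpos : (0:ℝ) < c * M + ε := by linarith
    have hkmul : k * (c * M + ε) = c * M := div_mul_cancel₀ _ (ne_of_gt hpos)
    have hims : w.im ≤ k * (-w.re) := by
      have h2 : w.im * (c * M + ε) ≤ (k * (-w.re)) * (c * M + ε) := by
        calc w.im * (c * M + ε) ≤ -w.re * (c * M) := hratio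
          _ = (k * (-w.re)) * (c * M + ε) := by
              rw [mul_comm k (-w.re), mul_assoc, hkmul]
      exact le_of_mul_le_mul_right h2 hpos
    have hwne : w ≠ 0 := by
      intro h
      rw [h] at hrneg
      simp at hrneg
    have habspos : 0 < ‖w‖ := norm_pos_iff.mpr hwne
    have hsq : (0:ℝ) < Real.sqrt (1 + k ^ 2) := Real.sqrt_pos.2 (by nlinarith)
    have habs : ‖w‖ = Real.sqrt (w.re ^ 2 + w.im ^ 2) := by
      rw [Complex.norm_def, Complex.normSq_apply]
      congr 1
      ring
    have hcmp : w.im / ‖w‖ ≤ k / Real.sqrt (1 + k ^ 2) := by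
      rw [div_le_div_iff₀ habspos hsq]
      have hL : w.im * Real.sqrt (1 + k ^ 2) = Real.sqrt (w.im ^ 2 * (1 + k ^ 2)) := by
        rw [Real.sqrt_mul (sq_nonneg _), Real.sqrt_sq him.le]
      have hR : k * ‖w‖ = Real.sqrt (k ^ 2 * (w.re ^ 2 + w.im ^ 2)) := by
        rw [habs, Real.sqrt_mul (sq_nonneg _), Real.sqrt_sq hk0.le]
      rw [hL, hR]
      apply Real.sqrt_le_sqrt
      have hsum : 0 ≤ k * (-w.re) + w.im :=
        add_nonneg (mul_nonneg hk0.le (by linarith)) him.le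
      have h10 : w.im ^ 2 ≤ k ^ 2 * w.re ^ 2 := by
        have h11 := mul_self_le_mul_self him.le hims
        calc w.im ^ 2 = w.im * w.im := sq w.im
          _ ≤ (k * (-w.re)) * (k * (-w.re)) := h11
          _ = k ^ 2 * w.re ^ 2 := by ring
      linarith [h10, mul_le_mul_of_nonneg_left h10 (sq_nonneg k)]
    have harcs : Real.arcsin (w.im / ‖w‖) ≤ Real.arctan k := by
      rw [Real.arctan_eq_arcsin]
      exact Real.monotone_arcsin hcmp
    rw [Complex.arg_of_re_neg_of_im_nonneg hrneg him.le, Complex.neg_im, neg_div,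
      Real.arcsin_neg]
    linarith
end
end

section
/- Let β > 0 and ρ ∈ C^∞([0,∞);ℝ) be non-decreasing with βρ'(x) < tan(π/8) for all x ≥ 0 and ρ(0) = 0 (so also βρ(x)/x < tan(π/8) for x > 0). Then the function S(x) = x² - 2βxρ(x) - β²ρ(x)² is strictly increasing on (0, ∞); consequently, if S(x) < S(t) for x, t > 0 then x < t and βtρ(t) ≥ βxρ(x). -/
open Real

noncomputable section

/-- monotonicity of `S(x) = x² - 2βxρ(x) - β²ρ(x)²`, from the proof of
Proposition 3.2 of the paper.  If `ρ` is smooth, non-decreasing, `ρ(0) = 0`, and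
`βρ'(x) < tan(π/8)` for all `x ≥ 0`, then `S` is strictly increasing on `(0, ∞)`;
consequently `S(x) < S(t)` for `x, t > 0` implies `x < t` and `βxρ(x) ≤ βtρ(t)`. -/
theorem S_strict_mono
    (β : ℝ) (hβ : 0 < β)
    (ρ : ℝ → ℝ) (hρ : ContDiff ℝ (⊤ : ℕ∞) ρ) (hmono : Monotone ρ) (hρ0 : ρ 0 = 0)
    (hρ' : ∀ x ≥ (0:ℝ), β * deriv ρ x < Real.tan (π/8)) :
    StrictMonoOn (fun x : ℝ => x ^ 2 - 2*β*x*ρ x - β ^ 2 * (ρ x) ^ 2) (Set.Ioi 0)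
      ∧ ∀ x t : ℝ, 0 < x → 0 < t →
          x ^ 2 - 2*β*x*ρ x - β ^ 2 * (ρ x) ^ 2
            < t ^ 2 - 2*β*t*ρ t - β ^ 2 * (ρ t) ^ 2 →
          x < t ∧ β*x*ρ x ≤ β*t*ρ t := by
  set T : ℝ := Real.tan (π/8) with hTdef
  have hpi8pos : (0:ℝ) < π/8 := by positivity
  have hpi8lt : (π/8 : ℝ) < π/2 := by nlinarith [Real.pi_pos]
  have hcos : 0 < Real.cos (π/8) :=
    Real.cos_pos_of_mem_Ioo ⟨by linarith, hpi8lt⟩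
  have hsin : 0 < Real.sin (π/8) :=
    Real.sin_pos_of_pos_of_lt_pi hpi8pos (by nlinarith [Real.pi_pos])
  have hT0 : 0 < T := by
    rw [hTdef, Real.tan_eq_sin_div_cos]; positivity
  have hTid : 2 * T + T ^ 2 = 1 := by
    have h1 : Real.sin (π/4) = Real.cos (π/4) := by
      rw [Real.sin_pi_div_four, Real.cos_pi_div_four]
    have h2 : Real.sin (π/4) = 2 * Real.sin (π/8) * Real.cos (π/8) := by
      rw [show (π/4 : ℝ) = 2 * (π/8) by ring, Real.sin_two_mul]
    have h3 : Real.cos (π/4) = Real.cos (π/8) ^ 2 - Real.sin (π/8) ^ 2 := by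
      rw [show (π/4 : ℝ) = 2 * (π/8) by ring, Real.cos_two_mul']
    have hT : T = Real.sin (π/8) / Real.cos (π/8) := by
      rw [hTdef, Real.tan_eq_sin_div_cos]
    have key : 2 * Real.sin (π/8) * Real.cos (π/8) + Real.sin (π/8) ^ 2
        = Real.cos (π/8) ^ 2 := by linarith
    rw [hT, div_pow, mul_div_assoc']
    rw [div_add_div _ _ (ne_of_gt hcos) (ne_of_gt (pow_pos hcos 2))]
    rw [div_eq_one_iff_eq (by positivity)]
    nlinarith [key]
  have hdρ : ∀ x : ℝ, HasDerivAt ρ (deriv ρ x) x := fun x =>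
    ((hρ.differentiable (by simp)) x).hasDerivAt
  -- β ρ x < T x for x > 0
  have hbound : ∀ x : ℝ, 0 < x → β * ρ x < T * x := by
    intro x hx
    have hmonoh : StrictMonoOn (fun y => T * y - β * ρ y) (Set.Ici 0) := by
      apply strictMonoOn_of_deriv_pos (convex_Ici 0)
      · exact ((continuous_const.mul continuous_id).sub
          (continuous_const.mul (hρ.continuous))).continuousOn
      · intro y hy
        rw [interior_Ici] at hy
        simp only [Set.mem_Ioi] at hy
        have hd : HasDerivAt (fun y => T * y - β * ρ y) (T * 1 - β * deriv ρ y) y :=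
          ((hasDerivAt_id y).const_mul T).sub ((hdρ y).const_mul β)
        rw [hd.deriv]
        have := hρ' y hy.le
        linarith
    have := hmonoh (Set.self_mem_Ici) (Set.mem_Ici.2 hx.le) hx
    simp only [hρ0, mul_zero, sub_zero] at this
    linarith
  have hρnn : ∀ x : ℝ, 0 ≤ x → 0 ≤ ρ x := by
    intro x hx
    have := hmono hx
    rw [hρ0] at this
    exact this
  have hS : StrictMonoOn (fun x : ℝ => x ^ 2 - 2*β*x*ρ x - β ^ 2 * (ρ x) ^ 2)
      (Set.Ioi 0) := by
    apply strictMonoOn_of_deriv_pos (convex_Ioi 0)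
    · exact ((continuous_pow 2).sub
        (((continuous_const.mul continuous_id).mul hρ.continuous))).sub
        (continuous_const.mul (hρ.continuous.pow 2)) |>.continuousOn
    · intro x hx
      rw [interior_Ioi] at hx
      simp only [Set.mem_Ioi] at hx
      have h2 : HasDerivAt (fun y : ℝ => 2*β*y*ρ y)
          (2*β*1*ρ x + 2*β*x*deriv ρ x) x := by
        have := (((hasDerivAt_id x).const_mul (2*β)).mul (hdρ x))
        simp only [id_eq] at this
        exact this
      have h1 : HasDerivAt (fun x : ℝ => x ^ 2) (2 * x ^ 1) x := by
        simpa using hasDerivAt_pow 2 x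
      have h3 : HasDerivAt (fun x : ℝ => β ^ 2 * (ρ x) ^ 2)
          (β ^ 2 * (2 * ρ x ^ 1 * deriv ρ x)) x :=
        ((hdρ x).pow 2).const_mul (β ^ 2)
      have hd : HasDerivAt (fun x : ℝ => x ^ 2 - 2*β*x*ρ x - β ^ 2 * (ρ x) ^ 2) _ x :=
        (h1.sub h2).sub h3
      rw [hd.deriv]
      have hb := hbound x hx
      have hd' := hρ' x hx.le
      have hρx := hρnn x hx.le
      have hpos : (0:ℝ) < x + β * ρ x := by nlinarith
      nlinarith [mul_lt_mul_of_pos_right hd' hpos]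
  refine ⟨hS, fun x t hx ht hlt => ?_⟩
  have hxt : x < t := by
    by_contra h
    push_neg at h
    rcases eq_or_lt_of_le h with h | h
    · rw [h] at hlt; exact lt_irrefl _ hlt
    · have := hS (Set.mem_Ioi.2 ht) (Set.mem_Ioi.2 hx) h
      simp only at this
      linarith
  refine ⟨hxt, ?_⟩
  have h1 : ρ x ≤ ρ t := hmono hxt.le
  have h2 : 0 ≤ ρ x := hρnn x hx.le
  calc β*x*ρ x ≤ β*t*ρ x := by
        nlinarith [mul_nonneg (mul_nonneg hβ.le h2) (sub_nonneg.2 hxt.le)]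
    _ ≤ β*t*ρ t := by
        nlinarith [mul_le_mul_of_nonneg_left h1 (mul_pos hβ ht).le]
end
end
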